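/- Let P = p_1...p_n be a self-uncorrelated word over {A,T,G,C} with p_1 = A and p_n = G. Then any concatenation of the form P^{t_1-1} q_1 P^{t_2-1} q_2 ... P^{t_r-1} q_r W, where 1 ≤ t_j < n, q_j ∈ {A,C,T}\{p_{t_j}}, P^{t} denotes the prefix p_1...p_t, and W ∈ {A,T,C}^{t_0} with t_0 < n, does not contain P as a substring. -/

import Mathlib

inductive Base : Type
  | A | T | G | C
deriving DecidableEq

/-- A word `X` is self-uncorrelated if no proper nonempty prefix of `X`
is also a suffix of `X`. -/
def selfUncorr {α : Type*} (X : List α) : Prop :=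
  ∀ k : ℕ, 0 < k → k < X.length → X.take k ≠ X.drop (X.length - k)

/-- `Code P Z` : `Z` is a concatenation `P^{t₁-1} q₁ ⋯ P^{tᵣ-1} qᵣ W` of blocks,
each consisting of a proper prefix `P^{t-1} = p₁…p_{t-1}` of `P` followed by a
symbol `q ∈ {A,C,T} \ {p_t}`, terminated by a word `W ∈ {A,T,C}^{t₀}` with
`t₀ < n`. -/
inductive Code (P : List Base) : List Base → Prop
  | term (W : List Base) (hlen : W.length < P.length)
      (hW : ∀ a ∈ W, a ≠ Base.G) : Code P W
  | block (t : ℕ) (q : Base) (Z : List Base) (ht1 : 1 ≤ t) (ht2 : t < P.length)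
      (hq : q ≠ Base.G) (hq2 : ∀ (h : t - 1 < P.length), q ≠ P.get ⟨t - 1, h⟩)
      (hZ : Code P Z) : Code P (P.take (t - 1) ++ q :: Z)


lemma getLast?_drop_of_lt {P : List Base} {m : ℕ} (hm : m < P.length) :
    (P.drop m).getLast? = P.getLast? := by
  conv_rhs => rw [← List.take_append_drop m P]
  rw [List.getLast?_append_of_ne_nil]
  intro h
  have := congrArg List.length h
  simp at this
  omega

lemma drop_block {P : List Base} {t : ℕ} (q : Base) (Z' : List Base)
    (ht1 : 1 ≤ t) (ht2 : t ≤ P.length) :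
    (P.take (t - 1) ++ q :: Z').drop t = Z' := by
  have hA : (P.take (t-1)).length = t - 1 := by rw [List.length_take]; omega
  rw [List.drop_append, hA,
    List.drop_eq_nil_of_le (by omega : (P.take (t-1)).length ≤ t), List.nil_append]
  have h3 : t - (t-1) = 1 := by omega
  rw [h3, List.drop_one, List.tail_cons]

lemma auxS {P : List Base} (hsu : selfUncorr P) (hlast : P.getLast? = some Base.G)
    {Z : List Base} (hZ : Code P Z) :
    ∀ m, 0 < m → m < P.length → ¬ P.drop m <+: Z := by
  induction hZ with
  | term W hlen hW =>
    intro m hm1 hm2 hpre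
    have hG : Base.G ∈ P.drop m := by
      have := getLast?_drop_of_lt hm2
      rw [hlast] at this
      exact List.mem_of_getLast? this
    exact hW _ (hpre.subset hG) rfl
  | block t q Z' ht1 ht2 hq hq2 hZ' ih =>
    intro m hm1 hm2 hpre
    have hA : (P.take (t-1)).length = t - 1 := by rw [List.length_take]; omega
    have heq : P.drop m = (P.take (t - 1) ++ q :: Z').take (P.length - m) := by
      have := List.prefix_iff_eq_take.mp hpre
      rw [this, List.length_drop]
    rw [List.take_append, hA] at heq
    rcases lt_trichotomy (P.length - m) t with hlt | heqt | hgt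
    · -- P.length - m ≤ t - 1
      have h2 : (q :: Z').take (P.length - m - (t-1)) = [] := by
        have : P.length - m - (t - 1) = 0 := by omega
        rw [this]; rfl
      rw [h2, List.append_nil, List.take_take] at heq
      have h3 : min (P.length - m) (t-1) = P.length - m := by omega
      rw [h3] at heq
      refine hsu (P.length - m) (by omega) (by omega) ?_
      rw [heq.symm]
      congr 1
      omega
    · -- P.length - m = t
      have htk : (P.take (t-1)).take (P.length - m) = P.take (t-1) := by
        apply List.take_of_length_le; omega
      have h2 : P.length - m - (t-1) = 1 := by omega
      rw [htk, h2] at heq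
      have h3 : (q :: Z').take 1 = [q] := by simp
      rw [h3] at heq
      have : (P.drop m).getLast? = some q := by
        rw [heq, List.getLast?_append_of_ne_nil _ (by simp)]
        rfl
      rw [getLast?_drop_of_lt hm2, hlast] at this
      exact hq (Option.some.inj this).symm
    · -- P.length - m > t
      have htk : (P.take (t-1)).take (P.length - m) = P.take (t-1) := by
        apply List.take_of_length_le; omega
      have h2 : (q :: Z').take (P.length - m - (t-1)) = q :: Z'.take (P.length - m - t) := by
        have : P.length - m - (t-1) = (P.length - m - t) + 1 := by omega
        rw [this, List.take_succ_cons]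
      rw [htk, h2] at heq
      refine ih (m + t) (by omega) (by omega) ?_
      have hdt := congrArg (List.drop t) heq
      rw [List.drop_drop, drop_block q _ ht1 (by omega)] at hdt
      rw [hdt]
      exact List.take_prefix _ _

/-- If `P` is self-uncorrelated with first symbol `A` and last symbol `G`, then no
string produced by the prefix-synchronized encoding contains `P` as a substring. -/
theorem stmt11 (P : List Base) (hsu : selfUncorr P)
    (hhead : P.head? = some Base.A) (hlast : P.getLast? = some Base.G)
    (Z : List Base) (hZ : Code P Z) : ¬ P <:+: Z := by
  induction hZ with
  | term W hlen hW =>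
    intro hinf
    exact absurd hinf.length_le (by omega)
  | block t q Z' ht1 ht2 hq hq2 hZ' ih =>
    intro hinf
    obtain ⟨pre, suf, hps⟩ := hinf
    have h := congrArg (List.drop t) hps
    rw [drop_block q _ ht1 (by omega), List.drop_append,
      List.drop_append] at h
    rcases le_or_gt t pre.length with hk | hk
    · -- occurrence entirely in Z'
      apply ih
      have e1 : t - pre.length = 0 := by omega
      have e2 : t - (pre ++ P).length = 0 := by
        rw [List.length_append]; omega
      rw [e1, e2, List.drop_zero, List.drop_zero] at h
      exact ⟨pre.drop t, suf, h⟩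
    · -- crossing occurrence
      have e1 : pre.drop t = [] := List.drop_eq_nil_of_le (by omega)
      rw [e1, List.nil_append] at h
      refine auxS hsu hlast hZ' (t - pre.length) (by omega) (by omega) ?_
      exact ⟨suf.drop (t - (pre ++ P).length), h⟩
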